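/- A finite directed multigraph D with a designated vertex z has k pairwise arc-disjoint out-arborescences rooted at z if and only if for every vertex v there are at least k arc-disjoint directed paths from z to v. -/

import Mathlib

set_option linter.unusedSectionVars false
set_option maxHeartbeats 1000000

open Relation

section

variable {V A : Type} [Fintype V] [Fintype A] [DecidableEq V] [DecidableEq A]

/-- `S` is a spanning out-arborescence rooted at `z` of the directed multigraph
with arc type `A` and endpoint maps `src`, `tgt`: the root has in-degree 0,
every other vertex has in-degree 1, and every vertex is reachable from `z`. -/
def IsOutArborescence (src tgt : A → V) (z : V) (S : Finset A) : Prop :=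
  ((S.filter (fun a => tgt a = z)).card = 0) ∧
  (∀ v : V, v ≠ z → (S.filter (fun a => tgt a = v)).card = 1) ∧
  (∀ v : V, ReflTransGen (fun x y => ∃ a ∈ S, src a = x ∧ tgt a = y) z v)

/-- `p` is a directed path (a list of arcs) from `z` to `v`. -/
def IsDirPath (src tgt : A → V) (z v : V) (p : List A) : Prop :=
  p.Nodup ∧ p.Chain' (fun a b => tgt a = src b) ∧
  ((p = [] ∧ z = v) ∨ (p.head?.map src = some z ∧ p.getLast?.map tgt = some v))

namespace EdmondsAux

open Finset

/-! ### List lemmas: extracting a trail from a walk -/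

lemma not_nodup_decomp {A : Type} [DecidableEq A] {p : List A} (h : ¬ p.Nodup) :
    ∃ (a : A) (q r s : List A), p = q ++ a :: r ++ a :: s := by
  rw [List.nodup_iff_count_le_one] at h
  push_neg at h
  obtain ⟨a, ha⟩ := h
  have hmem : a ∈ p := List.count_pos_iff.mp (by omega)
  obtain ⟨q, t, rfl⟩ := List.append_of_mem hmem
  rw [List.count_append, List.count_cons_self] at ha
  have : a ∈ q ∨ a ∈ t := by
    by_contra hc
    push_neg at hc
    rw [List.count_eq_zero_of_not_mem hc.1, List.count_eq_zero_of_not_mem hc.2] at ha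
    omega
  rcases this with hq | ht
  · obtain ⟨q1, q2, rfl⟩ := List.append_of_mem hq
    exact ⟨a, q1, q2, t, by simp⟩
  · obtain ⟨r, s, rfl⟩ := List.append_of_mem ht
    exact ⟨a, q, r, s, by simp⟩

lemma trail_of_walk {A : Type} [DecidableEq A] {C : A → A → Prop} :
    ∀ (p : List A), p.Chain' C →
    ∃ q : List A, q.Nodup ∧ q.Chain' C ∧ q.head? = p.head? ∧
      q.getLast? = p.getLast? ∧ ∀ a ∈ q, a ∈ p := by
  suffices h : ∀ (n : ℕ) (p : List A), p.length ≤ n → p.Chain' C →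
      ∃ q : List A, q.Nodup ∧ q.Chain' C ∧ q.head? = p.head? ∧
        q.getLast? = p.getLast? ∧ ∀ a ∈ q, a ∈ p by
    intro p; exact h p.length p le_rfl
  intro n
  induction n with
  | zero =>
    intro p hl hc
    rw [Nat.le_zero, List.length_eq_zero_iff] at hl
    subst hl
    exact ⟨[], List.nodup_nil, List.isChain_nil, rfl, rfl, by simp⟩
  | succ n ih =>
    intro p hn hc
    by_cases hnd : p.Nodup
    · exact ⟨p, hnd, hc, rfl, rfl, fun a ha => ha⟩
    · obtain ⟨a, q, r, s, rfl⟩ := not_nodup_decomp hnd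
      have hlen : (q ++ a :: s).length ≤ n := by
        simp at hn ⊢; omega
      have hc' := hc
      rw [show @List.Chain' A = List.IsChain from rfl, List.isChain_append] at hc'
      obtain ⟨hcl, hcs, hj⟩ := hc'
      rw [List.isChain_append] at hcl
      obtain ⟨hq, har, hj2⟩ := hcl
      have hc1 : (q ++ a :: s).Chain' C := by
        rw [show @List.Chain' A = List.IsChain from rfl, List.isChain_append]
        refine ⟨hq, hcs, ?_⟩
        intro x hx y hy
        simp only [List.head?_cons, Option.mem_def, Option.some.injEq] at hy
        subst hy
        exact hj2 x hx a (by simp)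
      obtain ⟨q', h1, h2, h3, h4, h5⟩ := ih (q ++ a :: s) hlen hc1
      refine ⟨q', h1, h2, ?_, ?_, ?_⟩
      · rw [h3]
        cases q with
        | nil => simp
        | cons b q => simp
      · rw [h4, List.getLast?_append_of_ne_nil _ (by simp : (a :: s) ≠ []),
          List.getLast?_append_of_ne_nil _ (by simp : (a :: s) ≠ [])]
      · intro b hb
        have := h5 b hb
        simp only [List.mem_append, List.mem_cons] at this ⊢
        tauto

/-! ### Walks from reachability, and crossing arcs -/

variable (src tgt : A → V)

lemma walk_of_reflTransGen (S : Finset A) {z v : V}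
    (h : ReflTransGen (fun x y => ∃ a ∈ S, src a = x ∧ tgt a = y) z v) :
    ∃ p : List A, p.Chain' (fun a b => tgt a = src b) ∧ (∀ a ∈ p, a ∈ S) ∧
      ((p = [] ∧ z = v) ∨
        (p.head?.map src = some z ∧ p.getLast?.map tgt = some v)) := by
  induction h with
  | refl => exact ⟨[], List.isChain_nil, by simp, Or.inl ⟨rfl, rfl⟩⟩
  | @tail b c hzb hbc ih =>
    obtain ⟨a, haS, hsa, hta⟩ := hbc
    obtain ⟨p, hc, hm, hend⟩ := ih
    refine ⟨p ++ [a], ?_, ?_, ?_⟩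
    · rw [show @List.Chain' A = List.IsChain from rfl, List.isChain_append]
      refine ⟨hc, List.isChain_singleton a, ?_⟩
      intro x hx y hy
      simp only [List.head?_cons, Option.mem_def, Option.some.injEq] at hy
      subst hy
      rcases hend with ⟨rfl, _⟩ | ⟨_, hl⟩
      · simp at hx
      · have : p.getLast? = some x := hx
        rw [this] at hl
        simp only [Option.map_some, Option.some.injEq] at hl
        rw [hl, hsa]
    · intro b hb
      rcases List.mem_append.mp hb with hb | hb
      · exact hm b hb
      · simp only [List.mem_singleton] at hb; exact hb ▸ haS
    · rcases hend with ⟨rfl, rfl⟩ | ⟨hh, hl⟩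
      · right
        constructor
        · simp [hsa]
        · simp [hta]
      · right
        have hpne : p ≠ [] := by
          intro h; rw [h] at hh; simp at hh
        constructor
        · rw [List.head?_append_of_ne_nil _ hpne]; exact hh
        · rw [List.getLast?_append_of_ne_nil _ (by simp : ([a] : List A) ≠ [])]
          simp [hta]

lemma exists_cross (X : Finset V) {v : V} :
    ∀ (p : List A) (x : V), p.Chain' (fun a b => tgt a = src b) →
      p.head?.map src = some x → p.getLast?.map tgt = some v → x ∈ X → v ∉ X →
      ∃ a ∈ p, src a ∈ X ∧ tgt a ∉ X := by
  intro p
  induction p with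
  | nil => intro x _ hh; simp at hh
  | cons a p ih =>
    intro x hc hh hl hxX hvX
    simp only [List.head?_cons, Option.map_some, Option.some.injEq] at hh
    by_cases htX : tgt a ∈ X
    · cases p with
      | nil =>
        simp only [List.getLast?_singleton, Option.map_some, Option.some.injEq] at hl
        exact absurd (hl ▸ htX) hvX
      | cons b p' =>
        have hc' : (b :: p').Chain' (fun a b => tgt a = src b) :=
          (List.isChain_cons_cons.mp hc).2
        have hab : tgt a = src b := (List.isChain_cons_cons.mp hc).1
        have hl' : ((b :: p').getLast?).map tgt = some v := by
          rw [show (a :: b :: p') = [a] ++ (b :: p') by simp,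
            List.getLast?_append_of_ne_nil _ (by simp : (b :: p') ≠ [])] at hl
          exact hl
        obtain ⟨c, hcmem, hcs⟩ := ih (src b) hc' (by simp) hl' (hab ▸ htX) hvX
        exact ⟨c, List.mem_cons_of_mem a hcmem, hcs⟩
    · exact ⟨a, List.mem_cons_self, hh ▸ hxX, htX⟩

/-! ### Cut machinery -/

def cutArcs (F : Finset A) (X : Finset V) : Finset A :=
  F.filter (fun a => src a ∈ X ∧ tgt a ∉ X)

def dcut (F : Finset A) (X : Finset V) : ℕ := (cutArcs src tgt F X).card

lemma dcut_submod (F : Finset A) (X Y : Finset V) :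
    dcut src tgt F (X ∪ Y) + dcut src tgt F (X ∩ Y) ≤
      dcut src tgt F X + dcut src tgt F Y := by
  classical
  simp only [dcut, cutArcs, Finset.card_filter]
  rw [← Finset.sum_add_distrib, ← Finset.sum_add_distrib]
  apply Finset.sum_le_sum
  intro a _
  by_cases h1 : src a ∈ X <;> by_cases h2 : src a ∈ Y <;>
    by_cases h3 : tgt a ∈ X <;> by_cases h4 : tgt a ∈ Y <;>
    simp [h1, h2, h3, h4]

lemma dcut_erase_ge (F : Finset A) (a : A) (X : Finset V) :
    dcut src tgt F X ≤ dcut src tgt (F.erase a) X + 1 := by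
  classical
  have h : cutArcs src tgt F X ⊆ insert a (cutArcs src tgt (F.erase a) X) := by
    intro b hb
    simp only [cutArcs, mem_filter] at hb
    by_cases hba : b = a
    · simp [hba]
    · simp only [mem_insert, cutArcs, mem_filter, Finset.mem_erase]
      exact Or.inr ⟨⟨hba, hb.1⟩, hb.2⟩
  calc dcut src tgt F X ≤ (insert a (cutArcs src tgt (F.erase a) X)).card :=
        Finset.card_le_card h
    _ ≤ dcut src tgt (F.erase a) X + 1 := Finset.card_insert_le _ _

lemma dcut_erase_eq (F : Finset A) (a : A) (X : Finset V)
    (h : ¬ (src a ∈ X ∧ tgt a ∉ X)) :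
    dcut src tgt (F.erase a) X = dcut src tgt F X := by
  classical
  unfold dcut cutArcs
  congr 1
  ext b
  simp only [mem_filter, Finset.mem_erase]
  constructor
  · rintro ⟨⟨_, hb⟩, h2⟩; exact ⟨hb, h2⟩
  · rintro ⟨hb, h2⟩
    refine ⟨⟨?_, hb⟩, h2⟩
    rintro rfl; exact h h2

lemma dcut_sdiff_of_mem (F T : Finset A) (a : A) (haT : a ∈ T) (X : Finset V) :
    dcut src tgt ((F.erase a) \ T) X = dcut src tgt (F \ T) X := by
  congr 1
  rw [Finset.erase_sdiff_comm, Finset.erase_eq_of_notMem]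
  simp [haT]

lemma ne_univ_of_not_mem {X : Finset V} {v : V} (hv : v ∉ X) : X ≠ univ :=
  fun h => hv (h ▸ mem_univ v)

/-! ### The key augmentation step (Lovász's argument) -/

lemma exists_good_arc (z : V) (k : ℕ) (hk : 1 ≤ k) (F : Finset A) (U : Finset V)
    (hzU : z ∈ U) (hUne : U ≠ univ)
    (H1 : ∀ X : Finset V, z ∈ X → X ≠ univ → k ≤ dcut src tgt F X + 1)
    (H2 : ∀ X : Finset V, z ∈ X → U ⊆ X → X ≠ univ → k ≤ dcut src tgt F X) :
    ∃ a ∈ F, src a ∈ U ∧ tgt a ∉ U ∧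
      ∀ X : Finset V, z ∈ X → X ≠ univ → src a ∈ X → tgt a ∉ X →
        k ≤ dcut src tgt F X := by
  classical
  set D := (univ : Finset (Finset V)).filter
    (fun X => z ∈ X ∧ X ∪ U ≠ univ ∧ dcut src tgt F X < k) with hD
  by_cases hDne : D.Nonempty
  · obtain ⟨Xm, hXmD, hmax⟩ : ∃ Xm ∈ D, ∀ x ∈ D, ¬ Xm < x := by
      obtain ⟨m, hm⟩ := Finset.exists_maximal hDne
      exact ⟨m, hm.1, fun x hx hlt => hlt.not_ge (hm.2 hx hlt.le)⟩
    simp only [hD, mem_filter, mem_univ, true_and] at hXmD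
    obtain ⟨hzXm, hXmU, dm⟩ := hXmD
    have hXm_ne : Xm ≠ univ := by
      intro h; apply hXmU; rw [h]; simp
    have step1 : k ≤ dcut src tgt F (Xm ∪ U) := by
      by_contra h
      push_neg at h
      have hmem : Xm ∪ U ∈ D := by
        simp only [hD, mem_filter, mem_univ, true_and]
        exact ⟨mem_union_right _ hzU, by rwa [union_assoc, union_self], h⟩
      have : ¬ Xm < Xm ∪ U := hmax _ hmem
      have heq : Xm ∪ U = Xm := by
        by_contra hne
        exact this (lt_of_le_of_ne subset_union_left (Ne.symm hne))
      have hUX : U ⊆ Xm := by rw [← heq]; exact subset_union_right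
      exact absurd (H2 Xm hzXm hUX hXm_ne) (by omega)
    have step2 : ∃ a ∈ F, src a ∈ U ∧ src a ∉ Xm ∧ tgt a ∉ Xm ∪ U := by
      by_contra h
      push_neg at h
      have hsub : cutArcs src tgt F (Xm ∪ U) ⊆ cutArcs src tgt F Xm := by
        intro b hb
        simp only [cutArcs, mem_filter, mem_union] at hb ⊢
        obtain ⟨hbF, hsrc, htgt⟩ := hb
        rcases hsrc with hs | hs
        · exact ⟨hbF, hs, fun hc => htgt (Or.inl hc)⟩
        · by_cases hsX : src b ∈ Xm
          · exact ⟨hbF, hsX, fun hc => htgt (Or.inl hc)⟩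
          · exact absurd (h b hbF hs hsX) (by simpa using htgt)
      have := Finset.card_le_card hsub
      simp only [dcut] at step1 dm
      omega
    obtain ⟨a, haF, hsU, hsXm, htXmU⟩ := step2
    have htU : tgt a ∉ U := fun h => htXmU (mem_union_right _ h)
    have htXm : tgt a ∉ Xm := fun h => htXmU (mem_union_left _ h)
    refine ⟨a, haF, hsU, htU, ?_⟩
    intro X hzX hXne hsX htX
    by_contra h''
    push_neg at h''
    have hcapz : z ∈ Xm ∩ X := mem_inter.mpr ⟨hzXm, hzX⟩
    have hcap_ne : Xm ∩ X ≠ univ := by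
      intro h
      apply hXm_ne
      apply Finset.eq_univ_of_forall
      intro v
      exact mem_of_mem_inter_left (h ▸ mem_univ v)
    have hcap := H1 _ hcapz hcap_ne
    have hsm := dcut_submod src tgt F Xm X
    have hun : dcut src tgt F (Xm ∪ X) < k := by omega
    have hmem : Xm ∪ X ∈ D := by
      simp only [hD, mem_filter, mem_univ, true_and]
      refine ⟨mem_union_left _ hzXm, ?_, hun⟩
      apply ne_univ_of_not_mem (v := tgt a)
      simp only [mem_union, not_or]
      exact ⟨⟨htXm, htX⟩, htU⟩
    have hnlt : ¬ Xm < Xm ∪ X := hmax _ hmem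
    have heq : Xm ∪ X = Xm := by
      by_contra hne
      exact hnlt (lt_of_le_of_ne subset_union_left (Ne.symm hne))
    have : src a ∈ Xm := heq ▸ mem_union_right _ hsX
    exact hsXm this
  · have hdU : 1 ≤ dcut src tgt F U := le_trans hk (H2 U hzU subset_rfl hUne)
    have : (cutArcs src tgt F U).Nonempty := by
      rw [← Finset.card_pos]; exact hdU
    obtain ⟨a, ha⟩ := this
    simp only [cutArcs, mem_filter] at ha
    obtain ⟨haF, hsU, htU⟩ := ha
    refine ⟨a, haF, hsU, htU, ?_⟩
    intro X hzX hXne hsX htX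
    by_contra h
    push_neg at h
    apply hDne
    refine ⟨X, ?_⟩
    simp only [hD, mem_filter, mem_univ, true_and]
    refine ⟨hzX, ?_, h⟩
    apply ne_univ_of_not_mem (v := tgt a)
    simp only [mem_union, not_or]
    exact ⟨htX, htU⟩

/-! ### Growing one arborescence -/

lemma grow (z : V) (k : ℕ) (hk : 1 ≤ k) :
    ∀ n (F : Finset A) (U : Finset V) (T : Finset A),
    Fintype.card V - U.card ≤ n →
    z ∈ U →
    (∀ X : Finset V, z ∈ X → X ≠ univ → k ≤ dcut src tgt F X + 1) →
    (∀ X : Finset V, z ∈ X → U ⊆ X → X ≠ univ → k ≤ dcut src tgt F X) →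
    (∀ a ∈ T, tgt a ∈ U ∧ tgt a ≠ z) →
    (∀ v ∈ U, v ≠ z → (T.filter (fun a => tgt a = v)).card = 1) →
    (∀ v ∈ U, ReflTransGen (fun x y => ∃ a ∈ T, src a = x ∧ tgt a = y) z v) →
    Disjoint F T →
    ∃ T' : Finset A, T ⊆ T' ∧ T' \ T ⊆ F ∧ IsOutArborescence src tgt z T' ∧
      (∀ X : Finset V, z ∈ X → X ≠ univ → k ≤ dcut src tgt (F \ T') X + 1) := by
  intro n
  induction n with
  | zero =>
    intro F U T hcard hzU H1 H2 harcs hdeg hreach hdisj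
    have hU : U = univ := by
      apply Finset.eq_univ_of_card
      have := Finset.card_le_univ U
      omega
    subst hU
    refine ⟨T, subset_rfl, by simp, ⟨?_, ?_, ?_⟩, ?_⟩
    · rw [Finset.card_eq_zero, Finset.filter_eq_empty_iff]
      intro a ha; exact (harcs a ha).2
    · intro v hv; exact hdeg v (mem_univ v) hv
    · intro v; exact hreach v (mem_univ v)
    · intro X hzX hXne
      rw [Finset.sdiff_eq_self_of_disjoint hdisj]
      exact H1 X hzX hXne
  | succ n ih =>
    intro F U T hcard hzU H1 H2 harcs hdeg hreach hdisj
    by_cases hU : U = univ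
    · subst hU
      refine ⟨T, subset_rfl, by simp, ⟨?_, ?_, ?_⟩, ?_⟩
      · rw [Finset.card_eq_zero, Finset.filter_eq_empty_iff]
        intro a ha; exact (harcs a ha).2
      · intro v hv; exact hdeg v (mem_univ v) hv
      · intro v; exact hreach v (mem_univ v)
      · intro X hzX hXne
        rw [Finset.sdiff_eq_self_of_disjoint hdisj]
        exact H1 X hzX hXne
    · obtain ⟨a, haF, hsU, htU, hgood⟩ :=
        exists_good_arc src tgt z k hk F U hzU hU H1 H2
      have haT : a ∉ T := Finset.disjoint_left.mp hdisj haF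
      have htz : tgt a ≠ z := fun h => htU (h ▸ hzU)
      obtain ⟨T', hTT', hT'F, harb, hcut⟩ :=
        ih (F.erase a) (insert (tgt a) U) (insert a T)
          (by rw [Finset.card_insert_of_notMem htU]
              have := Finset.card_le_univ (insert (tgt a) U)
              rw [Finset.card_insert_of_notMem htU] at this
              omega)
          (mem_insert_of_mem hzU)
          (by intro X hzX hXne
              by_cases hc : src a ∈ X ∧ tgt a ∉ X
              · have h1 := hgood X hzX hXne hc.1 hc.2
                have h2 := dcut_erase_ge src tgt F a X
                omega
              · rw [dcut_erase_eq src tgt F a X hc]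
                exact H1 X hzX hXne)
          (by intro X hzX hUX hXne
              have hta : tgt a ∈ X := hUX (mem_insert_self _ _)
              rw [dcut_erase_eq src tgt F a X (fun hc => hc.2 hta)]
              exact H2 X hzX (fun v hv => hUX (mem_insert_of_mem hv)) hXne)
          (by intro b hb
              rcases Finset.mem_insert.mp hb with rfl | hb
              · exact ⟨mem_insert_self _ _, htz⟩
              · exact ⟨mem_insert_of_mem (harcs b hb).1, (harcs b hb).2⟩)
          (by intro v hv hvz
              rw [Finset.filter_insert]
              rcases Finset.mem_insert.mp hv with rfl | hv
              · rw [if_pos rfl, Finset.card_insert_of_notMem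
                  (fun h => haT (Finset.mem_of_mem_filter a h))]
                have : T.filter (fun b => tgt b = tgt a) = ∅ := by
                  rw [Finset.filter_eq_empty_iff]
                  intro b hb h; exact htU (h ▸ (harcs b hb).1)
                rw [this]; simp
              · rw [if_neg (fun h : tgt a = v => htU (h ▸ hv))]
                exact hdeg v hv hvz)
          (by intro v hv
              have hmono : ∀ x y, (∃ b ∈ T, src b = x ∧ tgt b = y) →
                  (∃ b ∈ insert a T, src b = x ∧ tgt b = y) := by
                rintro x y ⟨b, hb, h⟩; exact ⟨b, mem_insert_of_mem hb, h⟩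
              rcases Finset.mem_insert.mp hv with rfl | hv
              · exact ReflTransGen.tail
                  (ReflTransGen.mono hmono _ _ (hreach (src a) hsU))
                  ⟨a, mem_insert_self _ _, rfl, rfl⟩
              · exact ReflTransGen.mono hmono _ _ (hreach v hv))
          (by rw [Finset.disjoint_left]
              intro b hb hbi
              rcases Finset.mem_insert.mp hbi with rfl | hbT
              · exact (Finset.notMem_erase b F) hb
              · exact Finset.disjoint_left.mp hdisj (Finset.mem_of_mem_erase hb) hbT)
      have haT' : a ∈ T' := hTT' (mem_insert_self _ _)
      refine ⟨T', le_trans (Finset.subset_insert a T) hTT', ?_, harb, ?_⟩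
      · intro b hb
        rw [Finset.mem_sdiff] at hb
        by_cases hba : b = a
        · exact hba ▸ haF
        · have : b ∈ T' \ insert a T := by
            rw [Finset.mem_sdiff, Finset.mem_insert]
            exact ⟨hb.1, fun h => h.elim hba hb.2⟩
          exact Finset.mem_of_mem_erase (hT'F this)
      · intro X hzX hXne
        rw [← dcut_sdiff_of_mem src tgt F T' a haT' X]
        exact hcut X hzX hXne

/-! ### Outer induction: k arc-disjoint arborescences from the cut condition -/

lemma arbs_of_cuts (z : V) :
    ∀ (k : ℕ) (F : Finset A),
    (∀ X : Finset V, z ∈ X → X ≠ univ → k ≤ dcut src tgt F X) →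
    ∃ T : Fin k → Finset A, (∀ i, IsOutArborescence src tgt z (T i)) ∧
      (∀ i, T i ⊆ F) ∧ (∀ i j, i ≠ j → Disjoint (T i) (T j)) := by
  intro k
  induction k with
  | zero =>
    intro F _
    exact ⟨fun i => i.elim0, fun i => i.elim0, fun i => i.elim0,
      fun i => i.elim0⟩
  | succ k ih =>
    intro F hF
    obtain ⟨T0, _, hT0F, harb, hcut⟩ :=
      grow src tgt z (k + 1) (by omega) (Fintype.card V) F {z} ∅
        (by omega)
        (Finset.mem_singleton_self z)
        (fun X hz hne => le_trans (hF X hz hne) (by omega))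
        (fun X hz _ hne => hF X hz hne)
        (by intro a ha; exact absurd ha (Finset.notMem_empty a))
        (by intro v hv hvz
            exact absurd (Finset.mem_singleton.mp hv) hvz)
        (by intro v hv
            rw [Finset.mem_singleton.mp hv])
        (Finset.disjoint_empty_right F)
    rw [Finset.sdiff_empty] at hT0F
    obtain ⟨Tr, hTr1, hTr2, hTr3⟩ := ih (F \ T0)
      (fun X hz hne => by have := hcut X hz hne; omega)
    refine ⟨Fin.cons T0 Tr, ?_, ?_, ?_⟩
    · intro i
      induction i using Fin.cases with
      | zero => simpa using harb
      | succ i => simpa using hTr1 i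
    · intro i
      induction i using Fin.cases with
      | zero => simpa using hT0F
      | succ i =>
        simp only [Fin.cons_succ]
        exact le_trans (hTr2 i) (Finset.sdiff_subset)
    · intro i j hij
      have key : ∀ i, Disjoint T0 (Tr i) := by
        intro i
        exact Finset.disjoint_of_subset_right (hTr2 i)
          Finset.disjoint_sdiff
      induction i using Fin.cases with
      | zero =>
        induction j using Fin.cases with
        | zero => exact absurd rfl hij
        | succ j => simpa using key j
      | succ i =>
        induction j using Fin.cases with
        | zero => simpa using (key i).symm
        | succ j =>
          simp only [Fin.cons_succ]
          exact hTr3 i j (fun h => hij (by rw [h]))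

end EdmondsAux

open EdmondsAux Finset

/-- Edmonds' branching theorem: a directed multigraph has `k` pairwise
arc-disjoint spanning out-arborescences rooted at `z` iff every vertex is
joined from `z` by `k` arc-disjoint directed paths. -/
theorem edmonds_arborescences (src tgt : A → V) (z : V) (k : ℕ) :
    (∃ T : Fin k → Finset A,
        (∀ i, IsOutArborescence src tgt z (T i)) ∧
        (∀ i j, i ≠ j → Disjoint (T i) (T j))) ↔
    (∀ v : V, ∃ p : Fin k → List A,
        (∀ i, IsDirPath src tgt z v (p i)) ∧
        (∀ i j, i ≠ j → ∀ a, a ∈ p i → a ∉ p j)) := by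
  constructor
  · rintro ⟨T, hT, hdisj⟩ v
    have h : ∀ i : Fin k, ∃ q : List A,
        IsDirPath src tgt z v q ∧ ∀ a ∈ q, a ∈ T i := by
      intro i
      obtain ⟨p, hc, hm, hend⟩ :=
        walk_of_reflTransGen src tgt (T i) ((hT i).2.2 v)
      obtain ⟨q, hnd, hqc, hh, hl, hsub⟩ := trail_of_walk p hc
      refine ⟨q, ⟨hnd, hqc, ?_⟩, fun a ha => hm a (hsub a ha)⟩
      rcases hend with ⟨rfl, hzv⟩ | ⟨hh', hl'⟩
      · left
        refine ⟨?_, hzv⟩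
        rw [← List.head?_eq_none_iff]
        rw [hh]; rfl
      · right
        exact ⟨by rw [hh]; exact hh', by rw [hl]; exact hl'⟩
    choose q hq1 hq2 using h
    exact ⟨q, hq1, fun i j hij a hai haj =>
      Finset.disjoint_left.mp (hdisj i j hij) (hq2 i a hai) (hq2 j a haj)⟩
  · intro hp
    have hcut : ∀ X : Finset V, z ∈ X → X ≠ univ →
        k ≤ dcut src tgt (univ : Finset A) X := by
      intro X hzX hXne
      obtain ⟨v, hv⟩ : ∃ v, v ∉ X := by
        by_contra h
        push_neg at h
        exact hXne (Finset.eq_univ_iff_forall.mpr h)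
      obtain ⟨p, hp1, hp2⟩ := hp v
      have hcr : ∀ i, ∃ a ∈ p i, src a ∈ X ∧ tgt a ∉ X := by
        intro i
        obtain ⟨hnd, hch, hend⟩ := hp1 i
        rcases hend with ⟨_, rfl⟩ | ⟨hh, hl⟩
        · exact absurd hzX hv
        · exact exists_cross src tgt X (p i) z hch hh hl hzX hv
      choose f hf1 hf2 hf3 using hcr
      have : (Finset.univ : Finset (Fin k)).card ≤ (cutArcs src tgt univ X).card := by
        apply Finset.card_le_card_of_injOn f
        · intro i _
          simp only [Finset.mem_coe, cutArcs, Finset.mem_filter]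
          exact ⟨Finset.mem_univ _, hf2 i, hf3 i⟩
        · intro i _ j _ hij
          by_contra hne
          exact hp2 i j hne (f i) (hf1 i) (hij ▸ hf1 j)
      simpa [dcut] using this
    obtain ⟨T, h1, _, h3⟩ := arbs_of_cuts src tgt z k univ hcut
    exact ⟨T, h1, h3⟩

end
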